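/- For every ε > 0 there exists δ > 0 such that for all a, b ∈ S^d within geodesic distance δ of the south pole (0,...,0,-1), stereographic projection from the north pole satisfies ‖π(a) - π(b)‖ ≤ (1/2 + ε)·dist(a,b). -/

import Mathlib

open Real InnerProductGeometry RealInnerProductSpace

noncomputable def stereoProj (d : ℕ) (x : EuclideanSpace ℝ (Fin (d + 1))) :
    EuclideanSpace ℝ (Fin d) :=
  WithLp.toLp 2 (fun i : Fin d => x i.castSucc / (1 - x (Fin.last d)))

lemma sum_sq_eq_normsq {n : ℕ} (v : EuclideanSpace ℝ (Fin n)) :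
    ∑ i, v i ^ 2 = ‖v‖ ^ 2 := by
  rw [← real_inner_self_eq_norm_sq]
  simp only [PiLp.inner_apply, RCLike.inner_apply, conj_trivial, sq]

noncomputable def tailVec {d : ℕ} (v : EuclideanSpace ℝ (Fin (d + 1))) :
    EuclideanSpace ℝ (Fin d) := WithLp.toLp 2 (fun i => v i.castSucc)

lemma tail_normsq {d : ℕ} (v : EuclideanSpace ℝ (Fin (d + 1))) :
    ‖tailVec v‖ ^ 2 = ‖v‖ ^ 2 - v (Fin.last d) ^ 2 := by
  rw [← sum_sq_eq_normsq, ← sum_sq_eq_normsq, Fin.sum_univ_castSucc]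
  simp [tailVec]

lemma tail_sub {d : ℕ} (a b : EuclideanSpace ℝ (Fin (d + 1))) :
    tailVec a - tailVec b = tailVec (a - b) := by
  ext i; simp [tailVec]

lemma coord_abs_le_norm {n : ℕ} (v : EuclideanSpace ℝ (Fin n)) (j : Fin n) :
    |v j| ≤ ‖v‖ := by
  have h : v j ^ 2 ≤ ‖v‖ ^ 2 := by
    rw [← sum_sq_eq_normsq]
    exact Finset.single_le_sum (fun i _ => sq_nonneg (v i)) (Finset.mem_univ j)
  calc |v j| = √(v j ^ 2) := (Real.sqrt_sq_eq_abs _).symm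
    _ ≤ √(‖v‖ ^ 2) := Real.sqrt_le_sqrt h
    _ = ‖v‖ := Real.sqrt_sq (norm_nonneg v)

lemma tail_norm_le {d : ℕ} (v : EuclideanSpace ℝ (Fin (d + 1))) :
    ‖tailVec v‖ ≤ ‖v‖ := by
  have h : ‖tailVec v‖ ^ 2 ≤ ‖v‖ ^ 2 := by
    rw [tail_normsq]; nlinarith [sq_nonneg (v (Fin.last d))]
  calc ‖tailVec v‖ = √(‖tailVec v‖ ^ 2) := (Real.sqrt_sq (norm_nonneg _)).symm
    _ ≤ √(‖v‖ ^ 2) := Real.sqrt_le_sqrt h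
    _ = ‖v‖ := Real.sqrt_sq (norm_nonneg v)

-- cos of angle to south pole
lemma cos_angle_south {d : ℕ} (a : EuclideanSpace ℝ (Fin (d + 1)))
    (ha : ‖a‖ = 1) :
    Real.cos (angle a (-(EuclideanSpace.single (Fin.last d) (1 : ℝ)))) = -(a (Fin.last d)) := by
  rw [cos_angle]
  have h1 : ‖-(EuclideanSpace.single (Fin.last d) (1 : ℝ))‖ = 1 := by
    rw [norm_neg, EuclideanSpace.norm_single]; simp
  rw [ha, h1, inner_neg_right, EuclideanSpace.inner_single_right]
  simp

-- chord ≤ angle for unit vectors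
lemma chord_le_angle {d : ℕ} (a b : EuclideanSpace ℝ (Fin (d + 1)))
    (ha : ‖a‖ = 1) (hb : ‖b‖ = 1) : ‖a - b‖ ≤ angle a b := by
  have hcos : Real.cos (angle a b) = (inner ℝ a b) := by
    rw [cos_angle, ha, hb]
    norm_num
  have hsq : ‖a - b‖ ^ 2 = 2 - 2 * Real.cos (angle a b) := by
    rw [norm_sub_sq_real, ha, hb, hcos]; ring
  have hθ0 : 0 ≤ angle a b := angle_nonneg a b
  have hbound : 1 - (angle a b) ^ 2 / 2 ≤ Real.cos (angle a b) :=
    Real.one_sub_sq_div_two_le_cos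
  nlinarith [norm_nonneg (a - b), sq_nonneg (‖a - b‖ - angle a b), sq_nonneg (‖a - b‖ + angle a b)]

lemma south_facts {d : ℕ} (δ : ℝ) (hδ1 : 0 < δ) (hδ2 : δ ≤ 1 / 2)
    (a : EuclideanSpace ℝ (Fin (d + 1))) (ha : ‖a‖ = 1)
    (hang : angle a (-(EuclideanSpace.single (Fin.last d) (1 : ℝ))) < δ) :
    2 - δ ^ 2 / 2 ≤ 1 - a (Fin.last d) ∧ 1 - a (Fin.last d) ≤ 2 ∧ ‖tailVec a‖ ≤ δ := by
  have hπ : δ ≤ π := by linarith [Real.pi_gt_three]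
  have hcoslt : Real.cos δ < Real.cos (angle a (-(EuclideanSpace.single (Fin.last d) (1 : ℝ)))) :=
    Real.cos_lt_cos_of_nonneg_of_le_pi (angle_nonneg _ _) hπ hang
  rw [cos_angle_south a ha] at hcoslt
  have hcosδ : 1 - δ ^ 2 / 2 ≤ Real.cos δ := Real.one_sub_sq_div_two_le_cos
  have habs : |a (Fin.last d)| ≤ 1 := by
    have := coord_abs_le_norm a (Fin.last d); rwa [ha] at this
  have hge : -1 ≤ a (Fin.last d) := by
    have := abs_le.mp habs; exact this.1
  refine ⟨by linarith, by linarith, ?_⟩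
  have htsq : ‖tailVec a‖ ^ 2 ≤ δ ^ 2 := by
    rw [tail_normsq, ha]
    nlinarith [hcoslt, hcosδ, hge, Real.cos_le_one δ]
  nlinarith [norm_nonneg (tailVec a), sq_nonneg (‖tailVec a‖ - δ)]

set_option maxHeartbeats 1000000 in
/-- For every `ε > 0` there is a `δ > 0` such that for all points `a, b ∈ S^d` within
geodesic distance `δ` of the south pole `(0,…,0,-1)`, stereographic projection from the
north pole satisfies `‖π(a) - π(b)‖ ≤ (1/2 + ε)·dist(a,b)`. -/
theorem stereoProj_dist_upper_bound_near_south_pole (d : ℕ) (ε : ℝ) (hε : 0 < ε) :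
    ∃ δ > (0 : ℝ), ∀ a b : EuclideanSpace ℝ (Fin (d + 1)),
      a ∈ Metric.sphere (0 : EuclideanSpace ℝ (Fin (d + 1))) 1 →
      b ∈ Metric.sphere (0 : EuclideanSpace ℝ (Fin (d + 1))) 1 →
      InnerProductGeometry.angle a (-(EuclideanSpace.single (Fin.last d) (1 : ℝ))) < δ →
      InnerProductGeometry.angle b (-(EuclideanSpace.single (Fin.last d) (1 : ℝ))) < δ →
      ‖stereoProj d a - stereoProj d b‖ ≤ (1 / 2 + ε) * InnerProductGeometry.angle a b := by
  set δ := min (ε / 2) (1 / 2) with hδdef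
  have hδpos : 0 < δ := lt_min (by linarith) (by norm_num)
  have hδε : δ ≤ ε / 2 := min_le_left _ _
  have hδhalf : δ ≤ 1 / 2 := min_le_right _ _
  refine ⟨δ, hδpos, ?_⟩
  intro a b ha hb hda hdb
  have ha1 : ‖a‖ = 1 := by simpa using ha
  have hb1 : ‖b‖ = 1 := by simpa using hb
  obtain ⟨hA1, hA2, hAt⟩ := south_facts δ hδpos hδhalf a ha1 hda
  obtain ⟨hB1, hB2, hBt⟩ := south_facts δ hδpos hδhalf b hb1 hdb
  set A := 1 - a (Fin.last d) with hA
  set B := 1 - b (Fin.last d) with hB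
  have hApos : (0 : ℝ) < A := by nlinarith
  have hBpos : (0 : ℝ) < B := by nlinarith
  have hA0 : A ≠ 0 := ne_of_gt hApos
  have hB0 : B ≠ 0 := ne_of_gt hBpos
  have hA158 : (15 : ℝ) / 8 ≤ A := by nlinarith
  have hB158 : (15 : ℝ) / 8 ≤ B := by nlinarith
  have hdecomp : stereoProj d a - stereoProj d b
      = (1 / A) • (tailVec a - tailVec b) + (1 / A - 1 / B) • tailVec b := by
    ext i
    show stereoProj d a i - stereoProj d b i
        = (1 / A) * (tailVec a i - tailVec b i) + (1 / A - 1 / B) * tailVec b i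
    simp only [stereoProj, tailVec, ← hA, ← hB]
    field_simp
    ring
  have hnorm : ‖stereoProj d a - stereoProj d b‖
      ≤ |1 / A| * ‖tailVec a - tailVec b‖ + |1 / A - 1 / B| * ‖tailVec b‖ := by
    rw [hdecomp]
    refine (norm_add_le _ _).trans ?_
    rw [norm_smul, norm_smul, Real.norm_eq_abs, Real.norm_eq_abs]
  set N := ‖a - b‖ with hN
  have hN0 : 0 ≤ N := norm_nonneg _
  have htail1 : ‖tailVec a - tailVec b‖ ≤ N := by
    rw [tail_sub]; exact tail_norm_le (a - b)
  have hcoord : |B - A| ≤ N := by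
    have h1 : B - A = (a - b) (Fin.last d) := by
      simp [hA, hB, PiLp.sub_apply]
    rw [h1]; exact coord_abs_le_norm (a - b) (Fin.last d)
  have hdiff : |1 / A - 1 / B| = |B - A| / (A * B) := by
    have h1 : 1 / A - 1 / B = (B - A) / (A * B) := by field_simp
    rw [h1, abs_div, abs_of_pos (mul_pos hApos hBpos)]
  have habsA : |1 / A| = 1 / A := abs_of_pos (by positivity)
  have hstep : ‖stereoProj d a - stereoProj d b‖ ≤ N * (1 / A + δ / (A * B)) := by
    have h2 : |1 / A| * ‖tailVec a - tailVec b‖ + |1 / A - 1 / B| * ‖tailVec b‖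
        ≤ (1 / A) * N + (N / (A * B)) * δ := by
      rw [habsA, hdiff]
      gcongr
    refine (hnorm.trans h2).trans (le_of_eq ?_)
    field_simp
  have hs : 1 / A + δ / (A * B) ≤ 1 / 2 + ε := by
    have h1 : 1 / A ≤ 1 / 2 + δ / 2 := by
      rw [div_le_iff₀ hApos]
      nlinarith [mul_le_mul_of_nonneg_left hA1 (by linarith : (0:ℝ) ≤ 1 / 2 + δ / 2),
        mul_nonneg hδpos.le hδpos.le, mul_nonneg (mul_nonneg hδpos.le hδpos.le) hδpos.le]
    have hAB2 : (2 : ℝ) ≤ A * B := by nlinarith [mul_le_mul hA158 hB158 (by norm_num) (by linarith : (0:ℝ) ≤ A)]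
    have h2 : δ / (A * B) ≤ δ / 2 :=
      div_le_div_of_nonneg_left hδpos.le (by norm_num) hAB2
    linarith
  have hchord : N ≤ angle a b := chord_le_angle a b ha1 hb1
  calc ‖stereoProj d a - stereoProj d b‖ ≤ N * (1 / A + δ / (A * B)) := hstep
    _ ≤ angle a b * (1 / 2 + ε) :=
        mul_le_mul hchord hs (by positivity) (angle_nonneg a b)
    _ = (1 / 2 + ε) * angle a b := mul_comm _ _
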